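/- With the context's notation, the set {f₁,…,f_s} is a basis of R = K⟦f₁,…,f_s⟧ (i.e. o(R) = ⟨o(f₁),…,o(f_s)⟩) if and only if for every i ∈ {1,…,r} with Sᵢ ≠ 0 there exists a formal power series Q ∈ K⟦X₁,…,X_s⟧ such that Q(f₁,…,f_s) = Sᵢ and every monomial X₁^{θ₁}⋯X_s^{θ_s} occurring with nonzero coefficient in Q satisfies θ₁·o(f₁) + ⋯ + θ_s·o(f_s) ≥ o(Sᵢ). -/

import Mathlib

set_option synthInstance.maxHeartbeats 1000000
set_option maxHeartbeats 1000000

open PowerSeries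

/-- The order of a formal power series: the least `i` such that the coefficient of `x^i`
is nonzero (junk value `0` for the zero series). -/
noncomputable def ord (K : Type*) [Field K] (f : PowerSeries K) : ℕ :=
  sInf {i | coeff i f ≠ 0}

/-- The set of orders of nonzero elements of a subalgebra `R ⊆ K⟦x⟧`. -/
def oSet (K : Type*) [Field K] (R : Subalgebra K (PowerSeries K)) : Set ℕ :=
  {n | ∃ f ∈ R, f ≠ 0 ∧ ord K f = n}

/-- The quotient `K⟦x⟧/R` has finite length as an `R`-module. -/
def FiniteLengthQuot (K : Type*) [Field K] (R : Subalgebra K (PowerSeries K)) : Prop :=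
  IsFiniteLength R (PowerSeries K ⧸ LinearMap.range (Algebra.linearMap R (PowerSeries K)))

/-- The closure of a subalgebra of `K⟦x⟧` in the `x`-adic topology:
`f` belongs to the closure of `S` iff for every `n` there is an element of `S`
agreeing with `f` on all coefficients up to `n`. -/
def adicClosure {K : Type*} [Field K] (S : Subalgebra K (PowerSeries K)) :
    Subalgebra K (PowerSeries K) where
  carrier := {f | ∀ n : ℕ, ∃ p ∈ S, ∀ i ≤ n, coeff i f = coeff i p}
  add_mem' := by
    intro f g hf hg n
    obtain ⟨p, hpS, hp⟩ := hf n
    obtain ⟨q, hqS, hq⟩ := hg n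
    exact ⟨p + q, S.add_mem hpS hqS, fun i hi => by
      simp [map_add, hp i hi, hq i hi]⟩
  mul_mem' := by
    intro f g hf hg n
    obtain ⟨p, hpS, hp⟩ := hf n
    obtain ⟨q, hqS, hq⟩ := hg n
    refine ⟨p * q, S.mul_mem hpS hqS, fun i hi => ?_⟩
    rw [coeff_mul, coeff_mul]
    refine Finset.sum_congr rfl fun ab hab => ?_
    have h := Finset.HasAntidiagonal.mem_antidiagonal.mp hab
    rw [hp ab.1 (by omega), hq ab.2 (by omega)]
  algebraMap_mem' := fun r => fun n => ⟨algebraMap K _ r, S.algebraMap_mem r, fun i _ => rfl⟩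

/-- `K⟦f₁,…,f_s⟧`, the subalgebra of `K⟦x⟧` consisting of all power series of the form
`P(f₁,…,f_s)` with `P ∈ K⟦X₁,…,X_s⟧` (for `fᵢ` of positive order), realized as the
`x`-adic closure of the subalgebra generated by `f₁, …, f_s`; this closure coincides with
the image of the substitution homomorphism `K⟦X₁,…,X_s⟧ → K⟦x⟧`, `Xᵢ ↦ fᵢ`. -/
noncomputable def seriesAlgebra {K : Type*} [Field K] {s : ℕ} (f : Fin s → PowerSeries K) :
    Subalgebra K (PowerSeries K) :=
  adicClosure (Algebra.adjoin K (Set.range f))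

/-- The coefficient of `xⁿ` in the substitution `P(f₁,…,f_s)`: when every `fᵢ` has
positive order, only exponents `θ` with all entries `≤ n` contribute, so the defining sum
is finite. -/
noncomputable def substCoeff {K : Type*} [Field K] {s : ℕ} (f : Fin s → PowerSeries K)
    (P : MvPowerSeries (Fin s) K) (n : ℕ) : K :=
  ∑ θ ∈ Finset.Iic (Finsupp.equivFunOnFinite.symm fun _ : Fin s => n),
    MvPowerSeries.coeff θ P * coeff n (∏ i, f i ^ θ i)

/-- The substitution homomorphism `ψ : K⟦X₁,…,X_s⟧ → K⟦x⟧`, `Xᵢ ↦ fᵢ` (for `fᵢ` of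
positive order), `P ↦ P(f₁,…,f_s)`, given coefficientwise. -/
noncomputable def substSeries {K : Type*} [Field K] {s : ℕ} (f : Fin s → PowerSeries K)
    (P : MvPowerSeries (Fin s) K) : PowerSeries K :=
  PowerSeries.mk (substCoeff f P)

namespace Aux
variable {K : Type*} [Field K]

lemma coeff_ord_ne_zero {g : PowerSeries K} (hg : g ≠ 0) : coeff (ord K g) g ≠ 0 := by
  have : {i | coeff i g ≠ 0}.Nonempty := by
    by_contra h
    apply hg
    ext n
    have := Set.not_nonempty_iff_eq_empty.mp h
    simpa [Set.eq_empty_iff_forall_notMem] using congrFun (congrArg Membership.mem this) n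
  exact Nat.sInf_mem this

lemma ord_le {g : PowerSeries K} {n : ℕ} (h : coeff n g ≠ 0) : ord K g ≤ n :=
  Nat.sInf_le h

lemma coeff_eq_zero_of_lt_ord {g : PowerSeries K} {i : ℕ} (h : i < ord K g) :
    coeff i g = 0 := by
  by_contra hc
  exact absurd (ord_le hc) (not_le.mpr h)

lemma ord_eq_of {g : PowerSeries K} {n : ℕ} (h1 : coeff n g ≠ 0)
    (h2 : ∀ i < n, coeff i g = 0) : ord K g = n :=
  le_antisymm (ord_le h1) (le_csInf ⟨n, h1⟩ fun m hm => by
    by_contra hc; exact hm (h2 m (not_le.mp hc)))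

/-- Monic of order `n`. -/
def MonicAt (g : PowerSeries K) (n : ℕ) : Prop :=
  coeff n g = 1 ∧ ∀ i < n, coeff i g = 0

lemma MonicAt.ne_zero {g : PowerSeries K} {n : ℕ} (h : MonicAt g n) : g ≠ 0 := by
  intro h0; rw [h0] at h; simpa using h.1

lemma MonicAt.ord_eq {g : PowerSeries K} {n : ℕ} (h : MonicAt g n) : ord K g = n :=
  ord_eq_of (by rw [h.1]; exact one_ne_zero) h.2

lemma MonicAt.one : MonicAt (1 : PowerSeries K) 0 :=
  ⟨by simp, fun i hi => absurd hi (Nat.not_lt_zero i)⟩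

lemma MonicAt.mul {g h : PowerSeries K} {m n : ℕ} (hg : MonicAt g m) (hh : MonicAt h n) :
    MonicAt (g * h) (m + n) := by
  refine ⟨?_, ?_⟩
  · rw [coeff_mul, Finset.sum_eq_single ((m : ℕ), (n : ℕ))]
    · rw [hg.1, hh.1, one_mul]
    · rintro ⟨a, b⟩ hab hne
      have hab' : a + b = m + n := Finset.HasAntidiagonal.mem_antidiagonal.mp hab
      have hne' : a ≠ m ∨ b ≠ n := by
        by_contra hc
        push_neg at hc
        exact hne (by rw [hc.1, hc.2])
      rcases lt_or_ge a m with h1 | h1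
      · rw [hg.2 a h1, zero_mul]
      · have hb : b < n := by omega
        rw [hh.2 b hb, mul_zero]
    · intro h; simp at h
  · intro k hk
    rw [coeff_mul]
    apply Finset.sum_eq_zero
    rintro ⟨a, b⟩ hab
    have hab' : a + b = k := Finset.HasAntidiagonal.mem_antidiagonal.mp hab
    rcases lt_or_ge a m with h1 | h1
    · rw [hg.2 a h1, zero_mul]
    · rw [hh.2 b (by omega), mul_zero]

lemma MonicAt.pow {g : PowerSeries K} {m : ℕ} (hg : MonicAt g m) (k : ℕ) :
    MonicAt (g ^ k) (k * m) := by
  induction k with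
  | zero => simpa using MonicAt.one
  | succ k ih =>
    rw [pow_succ, Nat.succ_mul]
    exact ih.mul hg

lemma MonicAt.prod {ι : Type*} (t : Finset ι) (g : ι → PowerSeries K) (m : ι → ℕ)
    (h : ∀ i ∈ t, MonicAt (g i) (m i)) :
    MonicAt (∏ i ∈ t, g i) (∑ i ∈ t, m i) := by
  induction t using Finset.cons_induction with
  | empty => simpa using MonicAt.one
  | cons a t ha ih =>
    rw [Finset.prod_cons, Finset.sum_cons]
    exact (h a (Finset.mem_cons_self a t)).mul (ih fun i hi => h i (Finset.mem_cons_of_mem hi))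


section Subst

variable {s : ℕ} (f : Fin s → PowerSeries K)

/-- The weight of an exponent. -/
noncomputable def wsum (θ : Fin s →₀ ℕ) : ℕ := ∑ j, θ j * ord K (f j)

/-- The product `f^θ`. -/
noncomputable def fpow (θ : Fin s →₀ ℕ) : PowerSeries K := ∏ j, f j ^ θ j

lemma wsum_add (θ μ : Fin s →₀ ℕ) : wsum f (θ + μ) = wsum f θ + wsum f μ := by
  simp [wsum, add_mul, Finset.sum_add_distrib]

lemma fpow_add (θ μ : Fin s →₀ ℕ) : fpow f (θ + μ) = fpow f θ * fpow f μ := by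
  simp [fpow, pow_add, Finset.prod_mul_distrib]

lemma fpow_zero : fpow f 0 = 1 := by simp [fpow]

lemma weight_eq_wsum (θ : Fin s →₀ ℕ) :
    Finsupp.weight (fun j => ord K (f j)) θ = wsum f θ := by
  rw [Finsupp.weight_apply, Finsupp.sum_fintype]
  · simp [wsum]
  · intro i; simp

variable (hford : ∀ i, 0 < ord K (f i)) (hmonic : ∀ i, coeff (ord K (f i)) (f i) = 1)

include hmonic in
lemma monicAt_f (i : Fin s) : MonicAt (f i) (ord K (f i)) :=
  ⟨hmonic i, fun _ h => coeff_eq_zero_of_lt_ord h⟩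

include hmonic in
lemma monicAt_fpow (θ : Fin s →₀ ℕ) : MonicAt (fpow f θ) (wsum f θ) :=
  MonicAt.prod Finset.univ _ _ fun j _ => (monicAt_f f hmonic j).pow (θ j)

include hmonic in
lemma coeff_fpow_self (θ : Fin s →₀ ℕ) : coeff (wsum f θ) (fpow f θ) = 1 :=
  (monicAt_fpow f hmonic θ).1

include hmonic in
lemma coeff_fpow_of_lt {θ : Fin s →₀ ℕ} {n : ℕ} (h : n < wsum f θ) :
    coeff n (fpow f θ) = 0 :=
  (monicAt_fpow f hmonic θ).2 n h

include hford in
lemma apply_le_wsum (θ : Fin s →₀ ℕ) (j : Fin s) : θ j ≤ wsum f θ := by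
  calc θ j ≤ θ j * ord K (f j) := Nat.le_mul_of_pos_right _ (hford j)
    _ ≤ wsum f θ := Finset.single_le_sum (f := fun j => θ j * ord K (f j))
        (fun _ _ => Nat.zero_le _) (Finset.mem_univ j)

lemma mem_box_iff {θ : Fin s →₀ ℕ} {n : ℕ} :
    θ ∈ Finset.Iic (Finsupp.equivFunOnFinite.symm fun _ : Fin s => n) ↔ ∀ j, θ j ≤ n := by
  rw [Finset.mem_Iic]
  constructor
  · intro h j; simpa using h j
  · intro h j; simpa using h j

include hford in
lemma mem_box_of_wsum_le {θ : Fin s →₀ ℕ} {n : ℕ} (h : wsum f θ ≤ n) :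
    θ ∈ Finset.Iic (Finsupp.equivFunOnFinite.symm fun _ : Fin s => n) :=
  mem_box_iff.mpr fun j => le_trans (apply_le_wsum f hford θ j) h

lemma coeff_substSeries (P : MvPowerSeries (Fin s) K) (n : ℕ) :
    coeff n (substSeries f P) =
      ∑ θ ∈ Finset.Iic (Finsupp.equivFunOnFinite.symm fun _ : Fin s => n),
        MvPowerSeries.coeff θ P * coeff n (fpow f θ) := by
  simp [substSeries, substCoeff, coeff_mk, fpow]

include hford hmonic in
lemma coeff_substSeries_eq_sum (P : MvPowerSeries (Fin s) K) (n : ℕ) (T : Finset (Fin s →₀ ℕ))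
    (hT : ∀ θ, wsum f θ ≤ n → θ ∈ T) :
    coeff n (substSeries f P) = ∑ θ ∈ T, MvPowerSeries.coeff θ P * coeff n (fpow f θ) := by
  rw [coeff_substSeries]
  set B := Finset.Iic (Finsupp.equivFunOnFinite.symm fun _ : Fin s => n) with hB
  have key : ∀ (U : Finset (Fin s →₀ ℕ)), (∀ θ, wsum f θ ≤ n → θ ∈ U) →
      ∑ θ ∈ U, MvPowerSeries.coeff θ P * coeff n (fpow f θ)
      = ∑ θ ∈ U ∪ (T ∪ B), MvPowerSeries.coeff θ P * coeff n (fpow f θ) := by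
    intro U hU
    apply Finset.sum_subset Finset.subset_union_left
    intro θ _ hθ
    have : ¬ wsum f θ ≤ n := fun h => hθ (hU θ h)
    rw [coeff_fpow_of_lt f hmonic (not_le.mp this), mul_zero]
  have h1 := key B (fun θ h => mem_box_of_wsum_le f hford h)
  have h2 := key T hT
  rw [h1, h2]
  congr 1
  ext θ
  simp only [Finset.mem_union]
  tauto

end Subst

section Subst2

variable {s : ℕ} (f : Fin s → PowerSeries K)
variable (hford : ∀ i, 0 < ord K (f i)) (hmonic : ∀ i, coeff (ord K (f i)) (f i) = 1)

lemma substSeries_add (P Q : MvPowerSeries (Fin s) K) :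
    substSeries f (P + Q) = substSeries f P + substSeries f Q := by
  ext n
  rw [map_add, coeff_substSeries, coeff_substSeries, coeff_substSeries,
    ← Finset.sum_add_distrib]
  exact Finset.sum_congr rfl fun θ _ => by rw [map_add, add_mul]

lemma substSeries_zero : substSeries f (0 : MvPowerSeries (Fin s) K) = 0 := by
  ext n
  rw [coeff_substSeries]
  simp

lemma substSeries_smul (c : K) (P : MvPowerSeries (Fin s) K) :
    substSeries f (c • P) = c • substSeries f P := by
  ext n
  rw [coeff_substSeries, map_smul, coeff_substSeries, smul_eq_mul, Finset.mul_sum]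
  refine Finset.sum_congr rfl fun θ _ => ?_
  rw [show (MvPowerSeries.coeff θ) (c • P) = c * MvPowerSeries.coeff θ P from
    map_smul (MvPowerSeries.coeff θ) c P]
  ring

/-- The substitution as an additive monoid hom. -/
noncomputable def substHom : MvPowerSeries (Fin s) K →+ PowerSeries K where
  toFun := substSeries f
  map_zero' := substSeries_zero f
  map_add' := substSeries_add f

lemma substHom_apply (P : MvPowerSeries (Fin s) K) : substHom f P = substSeries f P := rfl

include hford hmonic in
lemma substSeries_monomial_mul (τ : Fin s →₀ ℕ) (c : K) (P : MvPowerSeries (Fin s) K) :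
    substSeries f (MvPowerSeries.monomial τ c * P) = c • (fpow f τ * substSeries f P) := by
  classical
  ext n
  rw [coeff_substSeries_eq_sum f hford hmonic _ n
      ((Finset.Iic (Finsupp.equivFunOnFinite.symm fun _ : Fin s => n)).image (fun μ => τ + μ)
        ∪ Finset.Iic (Finsupp.equivFunOnFinite.symm fun _ : Fin s => n))
      (fun θ h => Finset.mem_union_right _ (mem_box_of_wsum_le f hford h))]
  rw [← Finset.sum_subset
      (Finset.subset_union_left :
        (Finset.Iic (Finsupp.equivFunOnFinite.symm fun _ : Fin s => n)).image (fun μ => τ + μ)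
          ⊆ _ ∪ Finset.Iic (Finsupp.equivFunOnFinite.symm fun _ : Fin s => n))]
  · rw [Finset.sum_image (fun μ _ ν _ h => by simpa using add_left_cancel h)]
    have hL : ∀ μ ∈ Finset.Iic (Finsupp.equivFunOnFinite.symm fun _ : Fin s => n),
        MvPowerSeries.coeff (τ + μ) (MvPowerSeries.monomial τ c * P)
            * coeff n (fpow f (τ + μ))
          = ∑ p ∈ Finset.HasAntidiagonal.antidiagonal n,
              c * MvPowerSeries.coeff μ P
                * (coeff p.1 (fpow f τ) * coeff p.2 (fpow f μ)) := by
      intro μ _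
      rw [MvPowerSeries.coeff_monomial_mul, if_pos le_self_add, add_tsub_cancel_left,
        fpow_add, PowerSeries.coeff_mul, Finset.mul_sum]
    rw [Finset.sum_congr rfl hL, map_smul, smul_eq_mul, PowerSeries.coeff_mul,
      Finset.mul_sum, Finset.sum_comm]
    apply Finset.sum_congr rfl
    intro p hp
    have hple : p.2 ≤ n := by
      have := Finset.HasAntidiagonal.mem_antidiagonal.mp hp; omega
    rw [coeff_substSeries_eq_sum f hford hmonic P p.2
        (Finset.Iic (Finsupp.equivFunOnFinite.symm fun _ : Fin s => n))
        (fun θ h => mem_box_of_wsum_le f hford (le_trans h hple)), Finset.mul_sum,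
      Finset.mul_sum]
    apply Finset.sum_congr rfl
    intro μ _
    ring
  · intro θ hθU hθI
    by_cases hτ : τ ≤ θ
    · by_cases hw : coeff n (fpow f θ) = 0
      · rw [hw, mul_zero]
      · exfalso
        apply hθI
        have hwn : wsum f θ ≤ n := by
          by_contra hc
          exact hw (coeff_fpow_of_lt f hmonic (not_le.mp hc))
        rw [Finset.mem_image]
        refine ⟨θ - τ, ?_, add_tsub_cancel_of_le hτ⟩
        rw [mem_box_iff]
        intro j
        calc (θ - τ) j ≤ θ j := by
              rw [Finsupp.tsub_apply]; omega
          _ ≤ n := (mem_box_iff.mp (mem_box_of_wsum_le f hford hwn)) j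
    · rw [MvPowerSeries.coeff_monomial_mul, if_neg hτ, zero_mul]

lemma substSeries_one : substSeries f (1 : MvPowerSeries (Fin s) K) = 1 := by
  classical
  ext n
  rw [coeff_substSeries]
  have h0 : (0 : Fin s →₀ ℕ) ∈ Finset.Iic (Finsupp.equivFunOnFinite.symm fun _ : Fin s => n) :=
    mem_box_iff.mpr fun j => Nat.zero_le n
  rw [Finset.sum_eq_single 0]
  · simp [MvPowerSeries.coeff_one, fpow_zero]
  · intro θ _ hθ
    rw [MvPowerSeries.coeff_one, if_neg hθ, zero_mul]
  · intro h; exact absurd h0 h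

include hford hmonic in
lemma substSeries_monomial (τ : Fin s →₀ ℕ) (c : K) :
    substSeries f (MvPowerSeries.monomial τ c) = c • fpow f τ := by
  have h := substSeries_monomial_mul f hford hmonic τ c 1
  rw [mul_one, substSeries_one f, mul_one] at h
  exact h

end Subst2

section Subst3

variable {s : ℕ} (f : Fin s → PowerSeries K)
variable (hford : ∀ i, 0 < ord K (f i)) (hmonic : ∀ i, coeff (ord K (f i)) (f i) = 1)

include hford hmonic in
lemma substSeries_coe_mul (P : MvPolynomial (Fin s) K) (Q : MvPowerSeries (Fin s) K) :
    substSeries f ((P : MvPowerSeries (Fin s) K) * Q)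
      = MvPolynomial.aeval f P * substSeries f Q := by
  induction P using MvPolynomial.induction_on' with
  | monomial θ a =>
    have hprod : MvPolynomial.aeval f (MvPolynomial.monomial θ a)
        = algebraMap K (PowerSeries K) a * fpow f θ := by
      rw [MvPolynomial.aeval_monomial]
      congr 1
      rw [Finsupp.prod_fintype _ _ (fun j => pow_zero (f j))]
      rfl
    rw [MvPolynomial.coe_monomial, substSeries_monomial_mul f hford hmonic, hprod,
      Algebra.smul_def, mul_assoc]
  | add p q hp hq =>
    rw [MvPolynomial.coe_add, add_mul, substSeries_add, hp, hq, map_add, add_mul]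

include hford hmonic in
lemma substSeries_coe (P : MvPolynomial (Fin s) K) :
    substSeries f (P : MvPowerSeries (Fin s) K) = MvPolynomial.aeval f P := by
  have h := substSeries_coe_mul f hford hmonic P 1
  rw [mul_one, substSeries_one f, mul_one] at h
  exact h

omit hford hmonic

lemma fpow_mem_adjoin (θ : Fin s →₀ ℕ) :
    fpow f θ ∈ Algebra.adjoin K (Set.range f) :=
  Subalgebra.prod_mem _ fun j _ =>
    Subalgebra.pow_mem _ (Algebra.subset_adjoin (Set.mem_range_self j)) _

/-- The submonoid of weights. -/
def wMonoid : AddSubmonoid ℕ where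
  carrier := {m | ∃ θ : Fin s →₀ ℕ, wsum f θ = m}
  zero_mem' := ⟨0, by simp [wsum]⟩
  add_mem' := by
    rintro a b ⟨θ, rfl⟩ ⟨μ, rfl⟩
    exact ⟨θ + μ, wsum_add f θ μ⟩

lemma mem_closure_iff (n : ℕ) :
    n ∈ AddSubmonoid.closure (Set.range fun j => ord K (f j)) ↔ ∃ θ, wsum f θ = n := by
  constructor
  · intro hn
    have hle : AddSubmonoid.closure (Set.range fun j => ord K (f j)) ≤ wMonoid f := by
      rw [AddSubmonoid.closure_le]
      rintro m ⟨j, rfl⟩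
      exact ⟨Finsupp.single j 1, by
        simp [wsum, Finsupp.single_apply]⟩
    exact hle hn
  · rintro ⟨θ, rfl⟩
    rw [show wsum f θ = ∑ j, θ j • ord K (f j) from rfl]
    exact AddSubmonoid.sum_mem _ fun j _ =>
      AddSubmonoid.nsmul_mem _ (AddSubmonoid.subset_closure (Set.mem_range_self j)) _

lemma lt_ord_of_coeff_eq_zero {g : PowerSeries K} {c : ℕ} (hg : g ≠ 0)
    (h : ∀ j ≤ c, coeff j g = 0) : c < ord K g := by
  by_contra hc
  exact coeff_ord_ne_zero hg (h _ (not_lt.mp hc))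

include hmonic in
omit hford in
lemma ord_fpow_sub_gt {θ θ' : Fin s →₀ ℕ} (hw : wsum f θ = wsum f θ')
    (hne : fpow f θ - fpow f θ' ≠ 0) : wsum f θ < ord K (fpow f θ - fpow f θ') := by
  apply lt_ord_of_coeff_eq_zero hne
  intro j hj
  rw [map_sub]
  rcases lt_or_eq_of_le hj with hlt | rfl
  · rw [coeff_fpow_of_lt f hmonic hlt, coeff_fpow_of_lt f hmonic (hw ▸ hlt), sub_zero]
  · rw [coeff_fpow_self f hmonic, hw, coeff_fpow_self f hmonic, sub_self]

end Subst3

section Mem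

variable {s : ℕ} (f : Fin s → PowerSeries K)
variable (hford : ∀ i, 0 < ord K (f i)) (hmonic : ∀ i, coeff (ord K (f i)) (f i) = 1)

lemma mem_adicClosure_iff {S : Subalgebra K (PowerSeries K)} {g : PowerSeries K} :
    g ∈ adicClosure S ↔ ∀ n : ℕ, ∃ p ∈ S, ∀ i ≤ n, coeff i g = coeff i p :=
  Iff.rfl

lemma adjoin_le_seriesAlgebra : Algebra.adjoin K (Set.range f) ≤ seriesAlgebra f :=
  fun p hp => mem_adicClosure_iff.mpr fun _ => ⟨p, hp, fun _ _ => rfl⟩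

lemma fpow_mem_seriesAlgebra (θ : Fin s →₀ ℕ) : fpow f θ ∈ seriesAlgebra f :=
  adjoin_le_seriesAlgebra f (fpow_mem_adjoin f θ)

/-- Truncation of a multivariate power series to a polynomial. -/
noncomputable def truncP (n : ℕ) (P : MvPowerSeries (Fin s) K) : MvPolynomial (Fin s) K :=
  ∑ θ ∈ Finset.Iic (Finsupp.equivFunOnFinite.symm fun _ : Fin s => n),
    MvPolynomial.monomial θ (MvPowerSeries.coeff θ P)

lemma coeff_truncP (n : ℕ) (P : MvPowerSeries (Fin s) K) (θ : Fin s →₀ ℕ) :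
    MvPolynomial.coeff θ (truncP n P)
      = if θ ∈ Finset.Iic (Finsupp.equivFunOnFinite.symm fun _ : Fin s => n)
        then MvPowerSeries.coeff θ P else 0 := by
  classical
  rw [truncP, MvPolynomial.coeff_sum, ← Finset.sum_ite_eq'
    (Finset.Iic (Finsupp.equivFunOnFinite.symm fun _ : Fin s => n)) θ
    (fun θ' => MvPowerSeries.coeff θ' P)]
  apply Finset.sum_congr rfl
  intro θ' _
  rw [MvPolynomial.coeff_monomial]

include hford hmonic in
lemma substSeries_mem_seriesAlgebra (P : MvPowerSeries (Fin s) K) :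
    substSeries f P ∈ seriesAlgebra f := by
  rw [seriesAlgebra, mem_adicClosure_iff]
  intro n
  refine ⟨MvPolynomial.aeval f (truncP n P), ?_, ?_⟩
  · rw [Algebra.adjoin_range_eq_range_aeval]
    exact ⟨truncP n P, rfl⟩
  · intro i hi
    have hT : ∀ θ : Fin s →₀ ℕ, wsum f θ ≤ i →
        θ ∈ Finset.Iic (Finsupp.equivFunOnFinite.symm fun _ : Fin s => n) :=
      fun θ h => mem_box_of_wsum_le f hford (le_trans h hi)
    rw [← substSeries_coe f hford hmonic,
      coeff_substSeries_eq_sum f hford hmonic P i _ hT,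
      coeff_substSeries_eq_sum f hford hmonic _ i _ hT]
    apply Finset.sum_congr rfl
    intro θ hθ
    rw [MvPolynomial.coeff_coe, coeff_truncP, if_pos hθ]

end Mem

section Forward

attribute [local instance] Classical.propDecidable

variable {s : ℕ} (f : Fin s → PowerSeries K)

/-- Pick an exponent of the right weight, if one exists. -/
noncomputable def pick (g : PowerSeries K) : Fin s →₀ ℕ :=
  if h : ∃ θ : Fin s →₀ ℕ, wsum f θ = ord K g then h.choose else 0

lemma pick_spec {g : PowerSeries K} (h : ∃ θ : Fin s →₀ ℕ, wsum f θ = ord K g) :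
    wsum f (pick f g) = ord K g := by
  rw [pick, dif_pos h]
  exact h.choose_spec

/-- The sequence of remainders in the division-like process. -/
noncomputable def seq (S₀ : PowerSeries K) : ℕ → PowerSeries K
  | 0 => S₀
  | k+1 =>
      if seq S₀ k = 0 then 0
      else seq S₀ k - (coeff (ord K (seq S₀ k)) (seq S₀ k)) • fpow f (pick f (seq S₀ k))

variable (hford : ∀ i, 0 < ord K (f i)) (hmonic : ∀ i, coeff (ord K (f i)) (f i) = 1)
variable (S₀ : PowerSeries K) (hS₀R : S₀ ∈ seriesAlgebra f)
variable (hbasis : ∀ g ∈ seriesAlgebra f, g ≠ 0 → ∃ θ : Fin s →₀ ℕ, wsum f θ = ord K g)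

include hS₀R in
lemma seq_mem (k : ℕ) : seq f S₀ k ∈ seriesAlgebra f := by
  induction k with
  | zero => exact hS₀R
  | succ k ih =>
    rw [seq]
    split
    · exact Subalgebra.zero_mem _
    · exact Subalgebra.sub_mem _ ih
        (Subalgebra.smul_mem _ (fpow_mem_seriesAlgebra f _) _)

lemma seq_zero_succ {k : ℕ} (h : seq f S₀ k = 0) : seq f S₀ (k+1) = 0 := by
  rw [seq, if_pos h]

lemma seq_ne_zero_of_succ {k : ℕ} (h : seq f S₀ (k+1) ≠ 0) : seq f S₀ k ≠ 0 :=
  fun h0 => h (seq_zero_succ f S₀ h0)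

include hford hmonic hS₀R hbasis in
lemma seq_coeff_le_zero {k : ℕ} (hk : seq f S₀ k ≠ 0) :
    ∀ j ≤ ord K (seq f S₀ k), coeff j (seq f S₀ (k+1)) = 0 := by
  intro j hj
  have hpick : wsum f (pick f (seq f S₀ k)) = ord K (seq f S₀ k) :=
    pick_spec f (hbasis _ (seq_mem f S₀ hS₀R k) hk)
  rw [seq, if_neg hk, map_sub, map_smul, smul_eq_mul]
  rcases lt_or_eq_of_le hj with hlt | rfl
  · rw [coeff_eq_zero_of_lt_ord hlt, coeff_fpow_of_lt f hmonic (by rw [hpick]; exact hlt),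
      mul_zero, sub_zero]
  · rw [← hpick, coeff_fpow_self f hmonic, hpick, mul_one, sub_self]

include hford hmonic hS₀R hbasis in
lemma seq_ord_lt {k : ℕ} (h : seq f S₀ (k+1) ≠ 0) :
    ord K (seq f S₀ k) < ord K (seq f S₀ (k+1)) :=
  lt_ord_of_coeff_eq_zero h
    (seq_coeff_le_zero f hford hmonic S₀ hS₀R hbasis (seq_ne_zero_of_succ f S₀ h))

include hford hmonic hS₀R hbasis in
lemma seq_ord_ge (k : ℕ) (h : seq f S₀ k ≠ 0) : ord K S₀ + k ≤ ord K (seq f S₀ k) := by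
  induction k with
  | zero => simp [seq]
  | succ k ih =>
    have hk := seq_ne_zero_of_succ f S₀ h
    have := seq_ord_lt f hford hmonic S₀ hS₀R hbasis h
    have := ih hk
    omega

include hford hmonic hS₀R hbasis in
lemma seq_ord_strict_mono {k k' : ℕ} (hkk : k < k') (h : seq f S₀ k' ≠ 0) :
    ord K (seq f S₀ k) < ord K (seq f S₀ k') := by
  induction k' with
  | zero => omega
  | succ m ih =>
    have hm := seq_ne_zero_of_succ f S₀ h
    have hlt := seq_ord_lt f hford hmonic S₀ hS₀R hbasis h
    rcases Nat.lt_succ_iff_lt_or_eq.mp hkk with h1 | rfl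
    · exact lt_trans (ih h1 hm) hlt
    · exact hlt

include hford hmonic hS₀R hbasis in
lemma seq_pick_inj {k k' : ℕ} (hk : seq f S₀ k ≠ 0) (hk' : seq f S₀ k' ≠ 0)
    (hpp : pick f (seq f S₀ k) = pick f (seq f S₀ k')) : k = k' := by
  have h1 : wsum f (pick f (seq f S₀ k)) = ord K (seq f S₀ k) :=
    pick_spec f (hbasis _ (seq_mem f S₀ hS₀R k) hk)
  have h2 : wsum f (pick f (seq f S₀ k')) = ord K (seq f S₀ k') :=
    pick_spec f (hbasis _ (seq_mem f S₀ hS₀R k') hk')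
  by_contra hne
  rcases Nat.lt_or_ge k k' with h | h
  · have := seq_ord_strict_mono f hford hmonic S₀ hS₀R hbasis h hk'
    rw [← h1, ← h2, hpp] at this
    omega
  · have hlt : k' < k := by omega
    have := seq_ord_strict_mono f hford hmonic S₀ hS₀R hbasis hlt hk
    rw [← h1, ← h2, hpp] at this
    omega

/-- The series `Q` collecting the monomials produced by the process. -/
noncomputable def Qser (S₀ : PowerSeries K) : MvPowerSeries (Fin s) K :=
  fun θ => if h : ∃ k, seq f S₀ k ≠ 0 ∧ pick f (seq f S₀ k) = θ
    then coeff (ord K (seq f S₀ h.choose)) (seq f S₀ h.choose) else 0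

lemma coeff_Qser (θ : Fin s →₀ ℕ) :
    MvPowerSeries.coeff θ (Qser f S₀)
      = if h : ∃ k, seq f S₀ k ≠ 0 ∧ pick f (seq f S₀ k) = θ
        then coeff (ord K (seq f S₀ h.choose)) (seq f S₀ h.choose) else 0 := rfl

include hford hmonic hS₀R hbasis in
lemma coeff_Qser_pick {k : ℕ} (hk : seq f S₀ k ≠ 0) :
    MvPowerSeries.coeff (pick f (seq f S₀ k)) (Qser f S₀)
      = coeff (ord K (seq f S₀ k)) (seq f S₀ k) := by
  rw [coeff_Qser]
  have h : ∃ k', seq f S₀ k' ≠ 0 ∧ pick f (seq f S₀ k') = pick f (seq f S₀ k) :=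
    ⟨k, hk, rfl⟩
  rw [dif_pos h]
  have := seq_pick_inj f hford hmonic S₀ hS₀R hbasis h.choose_spec.1 hk h.choose_spec.2
  rw [this]

omit hford hmonic hS₀R hbasis in
lemma coeff_Qser_ne_zero {θ : Fin s →₀ ℕ} (h : MvPowerSeries.coeff θ (Qser f S₀) ≠ 0) :
    ∃ k, seq f S₀ k ≠ 0 ∧ pick f (seq f S₀ k) = θ := by
  by_contra hc
  rw [coeff_Qser, dif_neg hc] at h
  exact h rfl

end Forward

section Forward2

attribute [local instance] Classical.propDecidable

variable {s : ℕ} (f : Fin s → PowerSeries K)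
variable (hford : ∀ i, 0 < ord K (f i)) (hmonic : ∀ i, coeff (ord K (f i)) (f i) = 1)
variable (S₀ : PowerSeries K) (hS₀R : S₀ ∈ seriesAlgebra f)
variable (hbasis : ∀ g ∈ seriesAlgebra f, g ≠ 0 → ∃ θ : Fin s →₀ ℕ, wsum f θ = ord K g)

include hford hmonic hS₀R hbasis in
lemma substSeries_Qser : substSeries f (Qser f S₀) = S₀ := by
  ext n
  rw [coeff_substSeries]
  -- telescoping identity for the right-hand side
  have htel : ∑ k ∈ Finset.range (n+1), (seq f S₀ k - seq f S₀ (k+1))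
      = S₀ - seq f S₀ (n+1) := by
    rw [Finset.sum_range_sub' (f := fun k => seq f S₀ k)]
    rfl
  have hcoefftop : coeff n (seq f S₀ (n+1)) = 0 := by
    by_cases h : seq f S₀ (n+1) = 0
    · rw [h, map_zero]
    · apply coeff_eq_zero_of_lt_ord
      have := seq_ord_ge f hford hmonic S₀ hS₀R hbasis (n+1) h
      omega
  have hrhs : coeff n S₀ = ∑ k ∈ Finset.range (n+1),
      (if seq f S₀ k = 0 then 0
        else coeff (ord K (seq f S₀ k)) (seq f S₀ k)
          * coeff n (fpow f (pick f (seq f S₀ k)))) := by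
    have h1 : coeff n S₀ = coeff n (S₀ - seq f S₀ (n+1)) := by
      rw [map_sub, hcoefftop, sub_zero]
    rw [h1, ← htel, map_sum]
    apply Finset.sum_congr rfl
    intro k _
    by_cases h : seq f S₀ k = 0
    · rw [if_pos h, h, seq_zero_succ f S₀ h, sub_zero, map_zero]
    · rw [if_neg h]
      have : seq f S₀ k - seq f S₀ (k+1)
          = coeff (ord K (seq f S₀ k)) (seq f S₀ k) • fpow f (pick f (seq f S₀ k)) := by
        rw [seq, if_neg h, sub_sub_cancel]
      rw [this, map_smul, smul_eq_mul]
  rw [hrhs]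
  -- reduce both sums to filtered supports
  rw [← Finset.sum_filter_of_ne (p := fun θ => MvPowerSeries.coeff θ (Qser f S₀) ≠ 0
      ∧ wsum f θ ≤ n) (s := Finset.Iic (Finsupp.equivFunOnFinite.symm fun _ : Fin s => n))
      (f := fun θ => MvPowerSeries.coeff θ (Qser f S₀) * coeff n (fpow f θ))
      (by
        intro θ _ hne
        constructor
        · intro h0; exact hne (by rw [h0, zero_mul])
        · by_contra hc
          exact hne (by rw [coeff_fpow_of_lt f hmonic (not_le.mp hc), mul_zero]))]
  rw [← Finset.sum_filter_of_ne (p := fun k => seq f S₀ k ≠ 0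
      ∧ wsum f (pick f (seq f S₀ k)) ≤ n) (s := Finset.range (n+1))
      (f := fun k => if seq f S₀ k = 0 then 0
        else coeff (ord K (seq f S₀ k)) (seq f S₀ k)
          * coeff n (fpow f (pick f (seq f S₀ k))))
      (by
        intro k _ hne
        by_cases h : seq f S₀ k = 0
        · exact absurd (if_pos h) hne
        · rw [if_neg h] at hne
          refine ⟨h, ?_⟩
          by_contra hc
          exact hne (by rw [coeff_fpow_of_lt f hmonic (not_le.mp hc), mul_zero]))]
  -- now a bijection between index sets
  symm
  apply Finset.sum_nbij' (i := fun k => pick f (seq f S₀ k))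
    (j := fun θ => if h : ∃ k, seq f S₀ k ≠ 0 ∧ pick f (seq f S₀ k) = θ then h.choose else 0)
  · intro k hk
    rw [Finset.mem_filter] at hk
    obtain ⟨hkr, hk0, hkw⟩ := hk
    rw [Finset.mem_filter]
    refine ⟨mem_box_of_wsum_le f hford hkw, ?_, hkw⟩
    rw [coeff_Qser_pick f hford hmonic S₀ hS₀R hbasis hk0]
    exact coeff_ord_ne_zero hk0
  · intro θ hθ
    rw [Finset.mem_filter] at hθ
    obtain ⟨hθB, hθQ, hθw⟩ := hθ
    have h := coeff_Qser_ne_zero f S₀ hθQ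
    rw [dif_pos h]
    rw [Finset.mem_filter]
    have hspec := h.choose_spec
    have hordk : wsum f θ = ord K (seq f S₀ h.choose) := by
      have hps := pick_spec f (hbasis _ (seq_mem f S₀ hS₀R h.choose) hspec.1)
      rw [hspec.2] at hps
      exact hps
    have hge := seq_ord_ge f hford hmonic S₀ hS₀R hbasis h.choose hspec.1
    refine ⟨Finset.mem_range.mpr (by omega), hspec.1, ?_⟩
    rw [hspec.2]; exact hθw
  · intro k hk
    rw [Finset.mem_filter] at hk
    obtain ⟨hkr, hk0, hkw⟩ := hk
    have h : ∃ k', seq f S₀ k' ≠ 0 ∧ pick f (seq f S₀ k') = pick f (seq f S₀ k) :=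
      ⟨k, hk0, rfl⟩
    rw [dif_pos h]
    exact seq_pick_inj f hford hmonic S₀ hS₀R hbasis h.choose_spec.1 hk0 h.choose_spec.2
  · intro θ hθ
    rw [Finset.mem_filter] at hθ
    obtain ⟨hθB, hθQ, hθw⟩ := hθ
    have h := coeff_Qser_ne_zero f S₀ hθQ
    rw [dif_pos h]
    exact h.choose_spec.2
  · intro k hk
    rw [Finset.mem_filter] at hk
    obtain ⟨hkr, hk0, hkw⟩ := hk
    rw [if_neg hk0, coeff_Qser_pick f hford hmonic S₀ hS₀R hbasis hk0]

include hford hmonic hS₀R hbasis in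
lemma Qser_weight {θ : Fin s →₀ ℕ} (h : MvPowerSeries.coeff θ (Qser f S₀) ≠ 0) :
    ord K S₀ ≤ wsum f θ := by
  obtain ⟨k, hk0, hkp⟩ := coeff_Qser_ne_zero f S₀ h
  have h1 : wsum f θ = ord K (seq f S₀ k) := by
    rw [← hkp, pick_spec f (hbasis _ (seq_mem f S₀ hS₀R k) hk0)]
  have h2 := seq_ord_ge f hford hmonic S₀ hS₀R hbasis k hk0
  omega

include hford hmonic hS₀R hbasis in
lemma exists_Q :
    ∃ Q : MvPowerSeries (Fin s) K, substSeries f Q = S₀ ∧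
      ∀ θ : Fin s →₀ ℕ, MvPowerSeries.coeff θ Q ≠ 0 → ord K S₀ ≤ wsum f θ :=
  ⟨Qser f S₀, substSeries_Qser f hford hmonic S₀ hS₀R hbasis,
    fun _ h => Qser_weight f hford hmonic S₀ hS₀R hbasis h⟩

end Forward2

section WHC

variable {s : ℕ}

lemma whc_mul_homog {w : Fin s → ℕ} {F : MvPolynomial (Fin s) K} {c : ℕ}
    (hF : F.IsWeightedHomogeneous w c) (h : MvPolynomial (Fin s) K) {d : ℕ} (hcd : c ≤ d) :
    MvPolynomial.weightedHomogeneousComponent w d (h * F)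
      = MvPolynomial.weightedHomogeneousComponent w (d - c) h * F := by
  classical
  ext θ
  rw [MvPolynomial.coeff_weightedHomogeneousComponent, MvPolynomial.coeff_mul,
    MvPolynomial.coeff_mul]
  split_ifs with hθ
  · apply Finset.sum_congr rfl
    rintro ⟨μ, ν⟩ hμν
    dsimp only
    rw [MvPolynomial.coeff_weightedHomogeneousComponent]
    by_cases hFν : MvPolynomial.coeff ν F = 0
    · rw [hFν, mul_zero, mul_zero]
    · have hν : Finsupp.weight w ν = c := hF hFν
      have hadd : μ + ν = θ := Finset.HasAntidiagonal.mem_antidiagonal.mp hμν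
      have hwa : Finsupp.weight w μ + Finsupp.weight w ν = Finsupp.weight w θ := by
        rw [← map_add, hadd]
      rw [if_pos (by omega)]
  · symm
    apply Finset.sum_eq_zero
    rintro ⟨μ, ν⟩ hμν
    dsimp only
    rw [MvPolynomial.coeff_weightedHomogeneousComponent]
    split_ifs with hμ
    · by_cases hFν : MvPolynomial.coeff ν F = 0
      · rw [hFν, mul_zero]
      · exfalso
        apply hθ
        have hν : Finsupp.weight w ν = c := hF hFν
        have hadd : μ + ν = θ := Finset.HasAntidiagonal.mem_antidiagonal.mp hμν
        have hwa : Finsupp.weight w μ + Finsupp.weight w ν = Finsupp.weight w θ := by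
          rw [← map_add, hadd]
        omega
    · rw [zero_mul]

lemma whc_mul_homog_zero {w : Fin s → ℕ} {F : MvPolynomial (Fin s) K} {c : ℕ}
    (hF : F.IsWeightedHomogeneous w c) (h : MvPolynomial (Fin s) K) {d : ℕ} (hcd : ¬ c ≤ d) :
    MvPolynomial.weightedHomogeneousComponent w d (h * F) = 0 := by
  classical
  ext θ
  rw [MvPolynomial.coeff_weightedHomogeneousComponent, MvPolynomial.coeff_zero]
  split_ifs with hθ
  · rw [MvPolynomial.coeff_mul]
    apply Finset.sum_eq_zero
    rintro ⟨μ, ν⟩ hμν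
    dsimp only
    by_cases hFν : MvPolynomial.coeff ν F = 0
    · rw [hFν, mul_zero]
    · exfalso
      apply hcd
      have hν : Finsupp.weight w ν = c := hF hFν
      have hadd : μ + ν = θ := Finset.HasAntidiagonal.mem_antidiagonal.mp hμν
      have hwa : Finsupp.weight w μ + Finsupp.weight w ν = Finsupp.weight w θ := by
        rw [← map_add, hadd]
      omega
  · rfl

end WHC

section Backward

attribute [local instance] Classical.propDecidable

variable {s : ℕ} (f : Fin s → PowerSeries K)
variable (hford : ∀ i, 0 < ord K (f i)) (hmonic : ∀ i, coeff (ord K (f i)) (f i) = 1)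

/-- The set of exponents of weight exactly `d`. -/
noncomputable def Wd (d : ℕ) : Finset (Fin s →₀ ℕ) :=
  (Finset.Iic (Finsupp.equivFunOnFinite.symm fun _ : Fin s => d)).filter
    (fun θ => wsum f θ = d)

include hford in
lemma mem_Wd {d : ℕ} {θ : Fin s →₀ ℕ} : θ ∈ Wd f d ↔ wsum f θ = d := by
  rw [Wd, Finset.mem_filter]
  exact ⟨fun h => h.2, fun h => ⟨mem_box_of_wsum_le f hford h.le, h⟩⟩

/-- The weight-`d` part of a power series, as a polynomial. -/
noncomputable def Apoly (d : ℕ) (Q : MvPowerSeries (Fin s) K) : MvPolynomial (Fin s) K :=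
  ∑ θ ∈ Wd f d, MvPolynomial.monomial θ (MvPowerSeries.coeff θ Q)

lemma coeff_Apoly (d : ℕ) (Q : MvPowerSeries (Fin s) K) (θ : Fin s →₀ ℕ) :
    MvPolynomial.coeff θ (Apoly f d Q)
      = if θ ∈ Wd f d then MvPowerSeries.coeff θ Q else 0 := by
  classical
  rw [Apoly, MvPolynomial.coeff_sum, ← Finset.sum_ite_eq' (Wd f d) θ
    (fun θ' => MvPowerSeries.coeff θ' Q)]
  apply Finset.sum_congr rfl
  intro θ' _
  rw [MvPolynomial.coeff_monomial]

include hford in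
lemma Apoly_homog (d : ℕ) (Q : MvPowerSeries (Fin s) K) :
    (Apoly f d Q).IsWeightedHomogeneous (fun j => ord K (f j)) d := by
  intro θ h
  rw [coeff_Apoly] at h
  split_ifs at h with hw
  · rw [weight_eq_wsum]
    exact (mem_Wd f hford).mp hw
  · exact absurd rfl h

lemma phi_monomial (θ : Fin s →₀ ℕ) (a : K) :
    MvPolynomial.aeval (fun i => (Polynomial.X : Polynomial K) ^ ord K (f i))
        (MvPolynomial.monomial θ a)
      = Polynomial.C a * Polynomial.X ^ wsum f θ := by
  rw [MvPolynomial.aeval_monomial, Finsupp.prod_fintype _ _ (fun j => pow_zero _)]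
  have h : ∏ i, ((Polynomial.X : Polynomial K) ^ ord K (f i)) ^ θ i
      = (Polynomial.X : Polynomial K) ^ wsum f θ := by
    rw [show wsum f θ = ∑ i, θ i * ord K (f i) from rfl, ← Finset.prod_pow_eq_pow_sum]
    apply Finset.prod_congr rfl
    intro i _
    rw [← pow_mul, mul_comm]
  rw [h, Polynomial.algebraMap_eq]

include hford hmonic in
lemma aevalf_monomial_one (θ : Fin s →₀ ℕ) :
    MvPolynomial.aeval f (MvPolynomial.monomial θ (1 : K)) = fpow f θ := by
  rw [← substSeries_coe f hford hmonic, MvPolynomial.coe_monomial,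
    substSeries_monomial f hford hmonic, one_smul]

variable {r : ℕ} (α β : Fin r → (Fin s →₀ ℕ))
variable (hker : RingHom.ker (MvPolynomial.aeval fun i =>
      (Polynomial.X : Polynomial K) ^ ord K (f i))
    = Ideal.span (Set.range fun i =>
        (MvPolynomial.monomial (α i) (1 : K) - MvPolynomial.monomial (β i) (1 : K))))

include hker in
lemma wsum_beta_eq_alpha (i : Fin r) : wsum f (β i) = wsum f (α i) := by
  have hmem : MvPolynomial.monomial (α i) (1 : K) - MvPolynomial.monomial (β i) (1 : K)
      ∈ RingHom.ker (MvPolynomial.aeval fun i =>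
        (Polynomial.X : Polynomial K) ^ ord K (f i)) := by
    rw [hker]
    exact Ideal.subset_span (Set.mem_range_self i)
  rw [RingHom.mem_ker] at hmem
  rw [map_sub, phi_monomial, phi_monomial, map_one, one_mul, one_mul, sub_eq_zero] at hmem
  have := congrArg Polynomial.natDegree hmem
  rw [Polynomial.natDegree_X_pow, Polynomial.natDegree_X_pow] at this
  omega

include hker in
lemma Fi_homog (i : Fin r) :
    (MvPolynomial.monomial (α i) (1 : K)
        - MvPolynomial.monomial (β i) (1 : K)).IsWeightedHomogeneous
      (fun j => ord K (f j)) (wsum f (α i)) := by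
  have h1 : (MvPolynomial.monomial (α i) (1:K)).IsWeightedHomogeneous
      (fun j => ord K (f j)) (wsum f (α i)) :=
    MvPolynomial.isWeightedHomogeneous_monomial _ _ _ (weight_eq_wsum f _)
  have h2 : (MvPolynomial.monomial (β i) (1:K)).IsWeightedHomogeneous
      (fun j => ord K (f j)) (wsum f (α i)) :=
    MvPolynomial.isWeightedHomogeneous_monomial _ _ _
      (by rw [weight_eq_wsum]; exact wsum_beta_eq_alpha f α β hker i)
  rw [← MvPolynomial.mem_weightedHomogeneousSubmodule] at h1 h2 ⊢
  exact Submodule.sub_mem _ h1 h2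

include hford hmonic hker in
lemma backward_step
    (hcond : ∀ i : Fin r, fpow f (α i) - fpow f (β i) ≠ 0 →
      ∃ Qi : MvPowerSeries (Fin s) K, substSeries f Qi = fpow f (α i) - fpow f (β i) ∧
        ∀ θ : Fin s →₀ ℕ, MvPowerSeries.coeff θ Qi ≠ 0 →
          ord K (fpow f (α i) - fpow f (β i)) ≤ wsum f θ)
    (d : ℕ) (Q : MvPowerSeries (Fin s) K)
    (hQw : ∀ θ : Fin s →₀ ℕ, MvPowerSeries.coeff θ Q ≠ 0 → d ≤ wsum f θ)
    (hA : (MvPolynomial.aeval fun i => (Polynomial.X : Polynomial K) ^ ord K (f i))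
        (Apoly f d Q) = 0) :
    ∃ Q' : MvPowerSeries (Fin s) K, substSeries f Q' = substSeries f Q ∧
      ∀ θ : Fin s →₀ ℕ, MvPowerSeries.coeff θ Q' ≠ 0 → d + 1 ≤ wsum f θ := by
  classical
  set w : Fin s → ℕ := fun j => ord K (f j) with hwdef
  set F : Fin r → MvPolynomial (Fin s) K := fun i =>
    MvPolynomial.monomial (α i) (1 : K) - MvPolynomial.monomial (β i) (1 : K) with hFdef
  have hAker : Apoly f d Q ∈ RingHom.ker (MvPolynomial.aeval fun i =>
      (Polynomial.X : Polynomial K) ^ ord K (f i)) := by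
    rw [RingHom.mem_ker]; exact hA
  rw [hker] at hAker
  obtain ⟨h, hhsum⟩ := Ideal.mem_span_range_iff_exists_fun.mp hAker
  -- weight-homogeneous components
  set g : Fin r → MvPolynomial (Fin s) K := fun i =>
    if wsum f (α i) ≤ d
      then MvPolynomial.weightedHomogeneousComponent w (d - wsum f (α i)) (h i) else 0
    with hgdef
  have hBi : ∀ i, MvPolynomial.weightedHomogeneousComponent w d (h i * F i) = g i * F i := by
    intro i
    by_cases hci : wsum f (α i) ≤ d
    · rw [hgdef]
      simp only [if_pos hci]
      exact whc_mul_homog (Fi_homog f α β hker i) (h i) hci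
    · rw [hgdef]
      simp only [if_neg hci]
      rw [zero_mul]
      exact whc_mul_homog_zero (Fi_homog f α β hker i) (h i) hci
  have hAdec : Apoly f d Q = ∑ i, g i * F i := by
    have h1 := congrArg (MvPolynomial.weightedHomogeneousComponent w d) hhsum
    rw [map_sum] at h1
    rw [← (Apoly_homog f hford d Q).weightedHomogeneousComponent_same, ← h1]
    exact Finset.sum_congr rfl fun i _ => hBi i
  have hghom : ∀ i, wsum f (α i) ≤ d →
      (g i).IsWeightedHomogeneous w (d - wsum f (α i)) := by
    intro i hci
    rw [hgdef]
    simp only [if_pos hci]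
    exact MvPolynomial.weightedHomogeneousComponent_isWeightedHomogeneous _ _
  -- the correction terms
  set D : Fin r → MvPowerSeries (Fin s) K := fun i =>
    if hci : wsum f (α i) ≤ d then
      (if hSi : fpow f (α i) - fpow f (β i) = 0 then 0
        else ((g i : MvPowerSeries (Fin s) K) * (hcond i hSi).choose))
    else 0 with hDdef
  have haevalF : ∀ i, MvPolynomial.aeval f (F i) = fpow f (α i) - fpow f (β i) := by
    intro i
    rw [hFdef]
    simp only [map_sub]
    rw [aevalf_monomial_one f hford hmonic, aevalf_monomial_one f hford hmonic]
  have hDsub : ∀ i, substSeries f (D i) = MvPolynomial.aeval f (g i * F i) := by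
    intro i
    by_cases hci : wsum f (α i) ≤ d
    · by_cases hSi : fpow f (α i) - fpow f (β i) = 0
      · rw [hDdef]
        simp only [dif_pos hci, dif_pos hSi]
        rw [substSeries_zero, map_mul, haevalF, hSi, mul_zero]
      · rw [hDdef]
        simp only [dif_pos hci, dif_neg hSi]
        rw [substSeries_coe_mul f hford hmonic, (hcond i hSi).choose_spec.1,
          map_mul, haevalF]
    · rw [hDdef]
      simp only [dif_neg hci]
      have : g i = 0 := by rw [hgdef]; simp only [if_neg hci]
      rw [substSeries_zero, this, zero_mul, map_zero]
  have hDw : ∀ i (θ : Fin s →₀ ℕ), MvPowerSeries.coeff θ (D i) ≠ 0 → d + 1 ≤ wsum f θ := by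
    intro i θ hne
    by_cases hci : wsum f (α i) ≤ d
    · by_cases hSi : fpow f (α i) - fpow f (β i) = 0
      · exfalso; apply hne; rw [hDdef]; simp only [dif_pos hci, dif_pos hSi]; rfl
      · rw [hDdef] at hne
        simp only [dif_pos hci, dif_neg hSi] at hne
        rw [MvPowerSeries.coeff_mul] at hne
        obtain ⟨p, hpmem, hpne⟩ := Finset.exists_ne_zero_of_sum_ne_zero hne
        have hμ : MvPolynomial.coeff p.1 (g i) ≠ 0 := by
          have := left_ne_zero_of_mul hpne
          rwa [MvPolynomial.coeff_coe] at this
        have hν : MvPowerSeries.coeff p.2 (hcond i hSi).choose ≠ 0 :=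
          right_ne_zero_of_mul hpne
        have h1 : wsum f p.1 = d - wsum f (α i) := by
          have := hghom i hci hμ
          rwa [weight_eq_wsum] at this
        have h2 : ord K (fpow f (α i) - fpow f (β i)) ≤ wsum f p.2 :=
          (hcond i hSi).choose_spec.2 p.2 hν
        have h3 : wsum f (α i) < ord K (fpow f (α i) - fpow f (β i)) :=
          ord_fpow_sub_gt f hmonic (wsum_beta_eq_alpha f α β hker i).symm hSi
        have hadd : p.1 + p.2 = θ := Finset.HasAntidiagonal.mem_antidiagonal.mp hpmem
        have h4 : wsum f θ = wsum f p.1 + wsum f p.2 := by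
          rw [← hadd, wsum_add]
        omega
    · exfalso; apply hne; rw [hDdef]; simp only [dif_neg hci]; rfl
  -- assemble
  refine ⟨(Q - (Apoly f d Q : MvPowerSeries (Fin s) K)) + ∑ i, D i, ?_, ?_⟩
  · rw [← substHom_apply, map_add, map_sub, map_sum]
    have h1 : substHom f (Apoly f d Q : MvPowerSeries (Fin s) K)
        = MvPolynomial.aeval f (Apoly f d Q) := by
      rw [substHom_apply, substSeries_coe f hford hmonic]
    have h2 : ∀ i, substHom f (D i) = MvPolynomial.aeval f (g i * F i) := fun i => hDsub i
    rw [h1, Finset.sum_congr rfl fun i _ => h2 i, ← map_sum, ← hAdec, substHom_apply]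
    ring
  · intro θ hne
    by_contra hlt
    apply hne
    rw [map_add, map_sub]
    have hQA : MvPowerSeries.coeff θ Q
        - MvPowerSeries.coeff θ (Apoly f d Q : MvPowerSeries (Fin s) K) = 0 := by
      rw [MvPolynomial.coeff_coe, coeff_Apoly]
      by_cases hwd : θ ∈ Wd f d
      · rw [if_pos hwd, sub_self]
      · rw [if_neg hwd]
        have hQθ : MvPowerSeries.coeff θ Q = 0 := by
          by_contra hc
          have hge := hQw θ hc
          have : wsum f θ ≠ d := fun hh => hwd ((mem_Wd f hford).mpr hh)
          omega
        rw [hQθ, sub_zero]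
    rw [hQA, map_sum, zero_add]
    apply Finset.sum_eq_zero
    intro i _
    by_contra hc
    exact hlt (hDw i θ hc)

end Backward

section Main

attribute [local instance] Classical.propDecidable

variable {s : ℕ} (f : Fin s → PowerSeries K)
variable (hford : ∀ i, 0 < ord K (f i)) (hmonic : ∀ i, coeff (ord K (f i)) (f i) = 1)
variable {r : ℕ} (α β : Fin r → (Fin s →₀ ℕ))
variable (hker : RingHom.ker (MvPolynomial.aeval fun i =>
      (Polynomial.X : Polynomial K) ^ ord K (f i))
    = Ideal.span (Set.range fun i =>
        (MvPolynomial.monomial (α i) (1 : K) - MvPolynomial.monomial (β i) (1 : K))))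

include hford hmonic hker in
lemma backward_main
    (hcond : ∀ i : Fin r, fpow f (α i) - fpow f (β i) ≠ 0 →
      ∃ Qi : MvPowerSeries (Fin s) K, substSeries f Qi = fpow f (α i) - fpow f (β i) ∧
        ∀ θ : Fin s →₀ ℕ, MvPowerSeries.coeff θ Qi ≠ 0 →
          ord K (fpow f (α i) - fpow f (β i)) ≤ wsum f θ) :
    ∀ g ∈ seriesAlgebra f, g ≠ 0 → ∃ θ : Fin s →₀ ℕ, wsum f θ = ord K g := by
  intro g hgR hg0
  by_contra hno
  push_neg at hno
  obtain ⟨p, hpadj, hpag⟩ := (mem_adicClosure_iff.mp hgR) (ord K g)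
  have hpn : coeff (ord K g) p ≠ 0 := by
    rw [← hpag _ le_rfl]; exact coeff_ord_ne_zero hg0
  have hplt : ∀ d < ord K g, coeff d p = 0 := fun d hd => by
    rw [← hpag d hd.le]; exact coeff_eq_zero_of_lt_ord hd
  have hpadj' : p ∈ (MvPolynomial.aeval (R := K) f).range := by
    rw [← Algebra.adjoin_range_eq_range_aeval]; exact hpadj
  obtain ⟨P₀, hP₀⟩ := hpadj'
  have main : ∀ d, d ≤ ord K g + 1 → ∃ Q : MvPowerSeries (Fin s) K,
      substSeries f Q = p ∧ ∀ θ : Fin s →₀ ℕ,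
        MvPowerSeries.coeff θ Q ≠ 0 → d ≤ wsum f θ := by
    intro d
    induction d with
    | zero =>
      intro _
      exact ⟨(P₀ : MvPowerSeries (Fin s) K),
        by rw [substSeries_coe f hford hmonic]; exact hP₀, fun θ _ => Nat.zero_le _⟩
    | succ d ih =>
      intro hd
      obtain ⟨Q, hQp, hQw⟩ := ih (by omega)
      have hsum : coeff d p = ∑ θ ∈ Wd f d, MvPowerSeries.coeff θ Q := by
        rw [← hQp, coeff_substSeries, ← Finset.sum_filter_of_ne (p := fun θ => wsum f θ = d)
          (by
            intro θ _ hne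
            have h1 : MvPowerSeries.coeff θ Q ≠ 0 := left_ne_zero_of_mul hne
            have h2 : coeff d (fpow f θ) ≠ 0 := right_ne_zero_of_mul hne
            have h3 := hQw θ h1
            have h4 : ¬ d < wsum f θ := fun hh => h2 (coeff_fpow_of_lt f hmonic hh)
            omega)]
        rw [show (Finset.Iic (Finsupp.equivFunOnFinite.symm fun _ : Fin s => d)).filter
            (fun θ => wsum f θ = d) = Wd f d from rfl]
        apply Finset.sum_congr rfl
        intro θ hθ
        have hwθ := (mem_Wd f hford).mp hθ
        rw [← hwθ, coeff_fpow_self f hmonic, mul_one]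
      have hsum0 : ∑ θ ∈ Wd f d, MvPowerSeries.coeff θ Q = 0 := by
        rcases Nat.lt_or_ge d (ord K g) with hlt | hge
        · rw [← hsum]; exact hplt d hlt
        · apply Finset.sum_eq_zero
          intro θ hθ
          exfalso
          have hwθ := (mem_Wd f hford).mp hθ
          have hdg : d = ord K g := by omega
          exact hno θ (by rw [hwθ, hdg])
      have hA0 : (MvPolynomial.aeval fun i => (Polynomial.X : Polynomial K) ^ ord K (f i))
          (Apoly f d Q) = 0 := by
        have hterm : ∀ θ ∈ Wd f d,
            (MvPolynomial.aeval fun i => (Polynomial.X : Polynomial K) ^ ord K (f i))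
              (MvPolynomial.monomial θ (MvPowerSeries.coeff θ Q))
            = Polynomial.C (MvPowerSeries.coeff θ Q) * Polynomial.X ^ d := by
          intro θ hθ
          rw [phi_monomial, (mem_Wd f hford).mp hθ]
        rw [Apoly, map_sum, Finset.sum_congr rfl hterm, ← Finset.sum_mul, ← map_sum,
          hsum0, map_zero, zero_mul]
      obtain ⟨Q', h1, h2⟩ := backward_step f hford hmonic α β hker hcond d Q hQw hA0
      exact ⟨Q', by rw [h1, hQp], h2⟩
  obtain ⟨Q, hQp, hQw⟩ := main (ord K g + 1) le_rfl
  apply hpn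
  rw [← hQp, coeff_substSeries]
  apply Finset.sum_eq_zero
  intro θ _
  by_cases h : MvPowerSeries.coeff θ Q = 0
  · rw [h, zero_mul]
  · rw [coeff_fpow_of_lt f hmonic (by have := hQw θ h; omega), mul_zero]

end Main
end Aux

/-- `{f₁,…,f_s}` is a basis of `R = K⟦f₁,…,f_s⟧` iff each `Sᵢ ≠ 0` admits an expression
`Sᵢ = Q(f₁,…,f_s)` in which every monomial of `Q` has weight `≥ o(Sᵢ)`. Here the `Fᵢ` are
binomials generating the kernel of `φ : K[X₁,…,X_s] → K[x]`, `Xᵢ ↦ x^{o(fᵢ)}`, and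
`Sᵢ = f₁^{αᵢ₁}⋯f_s^{αᵢ_s} − f₁^{βᵢ₁}⋯f_s^{βᵢ_s}`. -/
theorem stmt_7 (K : Type*) [Field K] {s r : ℕ} (f : Fin s → PowerSeries K)
    (hf0 : ∀ i, f i ≠ 0) (hford : ∀ i, 0 < ord K (f i))
    (hmonic : ∀ i, coeff (ord K (f i)) (f i) = 1)
    (hlen : FiniteLengthQuot K (seriesAlgebra f))
    (α β : Fin r → (Fin s →₀ ℕ))
    (hker : RingHom.ker (MvPolynomial.aeval fun i => (Polynomial.X : Polynomial K) ^ ord K (f i))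
      = Ideal.span (Set.range fun i =>
          (MvPolynomial.monomial (α i) (1 : K) - MvPolynomial.monomial (β i) (1 : K)))) :
    (oSet K (seriesAlgebra f)
        = ↑(AddSubmonoid.closure (Set.range fun j => ord K (f j)))) ↔
      (∀ i : Fin r,
        (∏ j, f j ^ (α i) j) - (∏ j, f j ^ (β i) j) ≠ 0 →
        ∃ Q : MvPowerSeries (Fin s) K,
          substSeries f Q = (∏ j, f j ^ (α i) j) - (∏ j, f j ^ (β i) j) ∧
          ∀ θ : Fin s →₀ ℕ, MvPowerSeries.coeff θ Q ≠ 0 →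
            ord K ((∏ j, f j ^ (α i) j) - (∏ j, f j ^ (β i) j))
              ≤ ∑ j, θ j * ord K (f j)) := by
  constructor
  · intro hLHS i hSi
    have hbasis : ∀ g ∈ seriesAlgebra f, g ≠ 0 →
        ∃ θ : Fin s →₀ ℕ, Aux.wsum f θ = ord K g := by
      intro g hgR hg0
      have h1 : ord K g ∈ oSet K (seriesAlgebra f) := ⟨g, hgR, hg0, rfl⟩
      rw [hLHS] at h1
      exact (Aux.mem_closure_iff f (ord K g)).mp h1
    have hmem : (∏ j, f j ^ (α i) j) - (∏ j, f j ^ (β i) j) ∈ seriesAlgebra f :=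
      Subalgebra.sub_mem _ (Aux.fpow_mem_seriesAlgebra f (α i))
        (Aux.fpow_mem_seriesAlgebra f (β i))
    obtain ⟨Q, hQ1, hQ2⟩ := Aux.exists_Q f hford hmonic _ hmem hbasis
    exact ⟨Q, hQ1, hQ2⟩
  · intro hcond
    have hb := Aux.backward_main f hford hmonic α β hker hcond
    apply Set.eq_of_subset_of_subset
    · rintro n ⟨g, hgR, hg0, rfl⟩
      rw [SetLike.mem_coe, Aux.mem_closure_iff]
      exact hb g hgR hg0
    · intro n hn
      rw [SetLike.mem_coe, Aux.mem_closure_iff] at hn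
      obtain ⟨θ, rfl⟩ := hn
      exact ⟨Aux.fpow f θ, Aux.fpow_mem_seriesAlgebra f θ,
        (Aux.monicAt_fpow f hmonic θ).ne_zero, (Aux.monicAt_fpow f hmonic θ).ord_eq⟩
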